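/- (Lemma A.2, part 1.) Let n ≥ 2, let Q = diag(q_1,…,q_n) with q_i > 0, let L_c be the Laplacian of a connected undirected graph, and define Q̄ := Q^{-1}𝟙𝟙ᵀQ^{-1}/(𝟙ᵀQ^{-1}𝟙) − Q^{-1} and Φ := −L_cQ + (1/n)𝟙𝟙ᵀ. Then Φ is invertible. Moreover, if γ > 0, 0 < θ < 1, and γ‖Φ^{-1}Q̄‖ ≤ θ, then γQ̄ + Φ is invertible, ‖(I + γΦ^{-1}Q̄)^{-1}‖ ≤ 1/(1 − θ), and for every d̃ ∈ ℝ^n one has ‖γ(γQ̄ + Φ)^{-1} Q̄² Q d̃‖ ≤ (γ/(1 − θ)) ‖Φ^{-1} Q̄² Q d̃‖. -/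

import Mathlib

open Matrix Filter

/-- Euclidean norm on `Fin k → ℝ`. -/
noncomputable def euclNorm {k : ℕ} (v : Fin k → ℝ) : ℝ :=
  ‖(WithLp.equiv 2 (Fin k → ℝ)).symm v‖

/-- Operator norm on matrices induced by the Euclidean norms. -/
noncomputable def matOpNorm {k l : ℕ} (A : Matrix (Fin k) (Fin l) ℝ) : ℝ :=
  ‖LinearMap.toContinuousLinearMap (Matrix.toEuclideanLin A)‖

/-- The all-ones vector `𝟙`. -/
def onesVec (k : ℕ) : Fin k → ℝ := fun _ => 1

/-- The all-ones matrix `𝟙𝟙ᵀ`. -/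
def onesMat (k : ℕ) : Matrix (Fin k) (Fin k) ℝ := Matrix.of fun _ _ => 1

/-- Scalar saturation: `sat(y; l, u) = l` if `y ≤ l`, `u` if `u ≤ y`, and `y` otherwise. -/
noncomputable def sat1 (y l u : ℝ) : ℝ := if y ≤ l then l else if u ≤ y then u else y

/-- Componentwise (multidimensional) saturation function. -/
noncomputable def satv {k : ℕ} (x xm xp : Fin k → ℝ) : Fin k → ℝ :=
  fun i => sat1 (x i) (xm i) (xp i)

open scoped Matrix.Norms.L2Operator

private lemma matOpNorm_eq_l2 {k : ℕ} (A : Matrix (Fin k) (Fin k) ℝ) : matOpNorm A = ‖A‖ := rfl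

private lemma euclNorm_mulVec_le {k : ℕ} (A : Matrix (Fin k) (Fin k) ℝ) (v : Fin k → ℝ) :
    euclNorm (A *ᵥ v) ≤ ‖A‖ * euclNorm v :=
  A.l2_opNorm_mulVec ((WithLp.equiv 2 (Fin k → ℝ)).symm v)

private lemma euclNorm_smul {k : ℕ} (c : ℝ) (v : Fin k → ℝ) :
    euclNorm (c • v) = |c| * euclNorm v := by
  simp [euclNorm, WithLp.toLp_smul, norm_smul]

private lemma euclNorm_nonneg {k : ℕ} (v : Fin k → ℝ) : 0 ≤ euclNorm v := norm_nonneg _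

/-- Lemma A.2, part 1: `Φ` is invertible; and if `γ‖Φ⁻¹Q̄‖ ≤ θ < 1`
then `γQ̄ + Φ` is invertible, `‖(I + γΦ⁻¹Q̄)⁻¹‖ ≤ 1/(1−θ)`, and the Neumann-series
bound on `γ(γQ̄ + Φ)⁻¹Q̄²Qd̃` holds. -/
theorem lemmaA2_part1 {n : ℕ} (hn : 2 ≤ n)
    (q : Fin n → ℝ) (hq : ∀ i, 0 < q i)
    (Lc : Matrix (Fin n) (Fin n) ℝ) (hsymm : Lc.IsSymm)
    (hoff : ∀ i j, i ≠ j → Lc i j ≤ 0)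
    (hLc1 : Lc *ᵥ onesVec n = 0)
    (hker : LinearMap.ker Lc.mulVecLin = Submodule.span ℝ {onesVec n})
    (Q Qinv Qbar Φ : Matrix (Fin n) (Fin n) ℝ)
    (hQ : Q = Matrix.diagonal q)
    (hQinv : Qinv = Matrix.diagonal fun i => (q i)⁻¹)
    (hQbar : Qbar =
      (onesVec n ⬝ᵥ (Qinv *ᵥ onesVec n))⁻¹ • (Qinv * onesMat n * Qinv) - Qinv)
    (hΦ : Φ = -(Lc * Q) + (n : ℝ)⁻¹ • onesMat n) :
    IsUnit Φ.det ∧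
    ∀ γ θ : ℝ, 0 < γ → 0 < θ → θ < 1 → γ * matOpNorm (Φ⁻¹ * Qbar) ≤ θ →
      IsUnit (γ • Qbar + Φ).det ∧
      matOpNorm (1 + γ • (Φ⁻¹ * Qbar))⁻¹ ≤ 1 / (1 - θ) ∧
      ∀ dtil : Fin n → ℝ,
        euclNorm (γ • (((γ • Qbar + Φ)⁻¹ * (Qbar * Qbar * Q)) *ᵥ dtil)) ≤
          γ / (1 - θ) * euclNorm ((Φ⁻¹ * (Qbar * Qbar * Q)) *ᵥ dtil) := by
  haveI : Nonempty (Fin n) := ⟨⟨0, by omega⟩⟩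
  have hn0 : (n : ℝ) ≠ 0 := by positivity
  -- column sums of the Laplacian vanish
  have hcol : ∀ j, ∑ i, Lc i j = 0 := by
    intro j
    have h1 := congrFun hLc1 j
    simp only [mulVec, dotProduct, onesVec, mul_one, Pi.zero_apply] at h1
    calc ∑ i, Lc i j = ∑ i, Lc j i := Finset.sum_congr rfl fun i _ => hsymm.apply j i
      _ = 0 := h1
  -- Φ is invertible
  have hdetΦ : IsUnit Φ.det := by
    rw [isUnit_iff_ne_zero]
    intro h0
    obtain ⟨v, hv, hΦv⟩ := Matrix.exists_mulVec_eq_zero_iff.2 h0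
    set w := Q *ᵥ v with hw
    have hLQ : (Lc * Q) *ᵥ v = Lc *ᵥ w := by rw [hw, mulVec_mulVec]
    have hones : onesMat n *ᵥ v = fun _ => ∑ j, v j := by
      funext i; simp [onesMat, mulVec, dotProduct]
    rw [hΦ, add_mulVec, neg_mulVec, smul_mulVec, hLQ, hones] at hΦv
    have hpt : ∀ i, -((Lc *ᵥ w) i) + (n : ℝ)⁻¹ * (∑ j, v j) = 0 := by
      intro i
      have := congrFun hΦv i
      simpa using this
    have hsumL : ∑ i, (Lc *ᵥ w) i = 0 := by
      have heq : ∑ i, (Lc *ᵥ w) i = ∑ j, (∑ i, Lc i j) * w j := by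
        simp only [mulVec, dotProduct]
        rw [Finset.sum_comm]
        simp [Finset.sum_mul]
      rw [heq]
      simp [hcol]
    have hs : ∑ j, v j = 0 := by
      have h2 : ∑ i, (-((Lc *ᵥ w) i) + (n : ℝ)⁻¹ * (∑ j, v j)) = 0 :=
        Finset.sum_eq_zero fun i _ => hpt i
      rw [Finset.sum_add_distrib, Finset.sum_neg_distrib, hsumL, neg_zero, zero_add,
        Finset.sum_const, Finset.card_univ, Fintype.card_fin, nsmul_eq_mul] at h2
      field_simp at h2
      exact h2
    have hLw : Lc *ᵥ w = 0 := by
      funext i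
      have := hpt i
      rw [hs, mul_zero, add_zero] at this
      simpa using this
    have hwker : w ∈ LinearMap.ker Lc.mulVecLin := by
      rw [LinearMap.mem_ker, mulVecLin_apply]
      exact hLw
    rw [hker, Submodule.mem_span_singleton] at hwker
    obtain ⟨c, hc⟩ := hwker
    have hvi : ∀ i, v i = c * (q i)⁻¹ := by
      intro i
      have h3 := congrFun hc i
      simp only [Pi.smul_apply, onesVec, smul_eq_mul, mul_one, hw, hQ] at h3
      rw [mulVec_diagonal] at h3
      rw [h3, mul_comm (q i) (v i), mul_assoc, mul_inv_cancel₀ (hq i).ne', mul_one]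
    have hpos : 0 < ∑ j, (q j)⁻¹ :=
      Finset.sum_pos (fun j _ => inv_pos.2 (hq j)) Finset.univ_nonempty
    have hc0 : c = 0 := by
      have hsum : ∑ j, v j = c * ∑ j, (q j)⁻¹ := by
        simp only [hvi]
        rw [Finset.mul_sum]
      rw [hs] at hsum
      rcases mul_eq_zero.1 hsum.symm with h | h
      · exact h
      · exact absurd h hpos.ne'
    exact hv (funext fun i => by simp [hvi i, hc0])
  refine ⟨hdetΦ, ?_⟩
  intro γ θ hγ hθ0 hθ1 hle
  have hΦunit : IsUnit Φ := (Matrix.isUnit_iff_isUnit_det Φ).2 hdetΦ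
  set B : Matrix (Fin n) (Fin n) ℝ := γ • (Φ⁻¹ * Qbar) with hBdef
  have hBnorm : ‖B‖ ≤ θ := by
    rw [hBdef, norm_smul, Real.norm_eq_abs, abs_of_pos hγ, ← matOpNorm_eq_l2]
    exact hle
  have hB1 : ‖B‖ < 1 := lt_of_le_of_lt hBnorm hθ1
  have h1θ : (0 : ℝ) < 1 - θ := by linarith
  have hu : IsUnit ((1 : Matrix (Fin n) (Fin n) ℝ) + B) := by
    have h := (Units.oneSub (-B) (by rwa [norm_neg])).isUnit
    rwa [Units.val_oneSub, sub_neg_eq_add] at h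
  have hdet1B : IsUnit ((1 : Matrix (Fin n) (Fin n) ℝ) + B).det :=
    (Matrix.isUnit_iff_isUnit_det _).1 hu
  have hfac : γ • Qbar + Φ = Φ * (1 + B) := by
    rw [mul_add, mul_one, hBdef, mul_smul_comm, ← Matrix.mul_assoc,
      Matrix.mul_nonsing_inv Φ hdetΦ, Matrix.one_mul, add_comm]
  have hdetsum : IsUnit (γ • Qbar + Φ).det := by
    rw [hfac]
    exact (Matrix.isUnit_iff_isUnit_det _).1 (hΦunit.mul hu)
  set C := ((1 : Matrix (Fin n) (Fin n) ℝ) + B)⁻¹ with hCdef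
  have hone : ‖(1 : Matrix (Fin n) (Fin n) ℝ)‖ = 1 := by
    rw [Matrix.cstar_norm_def, _root_.map_one, ContinuousLinearMap.one_def,
      ContinuousLinearMap.norm_id]
  have hCid : C = 1 - C * B := by
    have h1 : C * (1 + B) = 1 := Matrix.nonsing_inv_mul _ hdet1B
    rw [mul_add, mul_one] at h1
    exact eq_sub_of_add_eq h1
  have hCB : ‖C‖ ≤ 1 / (1 - θ) := by
    have key : ‖C‖ ≤ 1 + ‖C‖ * θ := by
      calc ‖C‖ = ‖1 - C * B‖ := by rw [← hCid]
        _ ≤ ‖(1 : Matrix (Fin n) (Fin n) ℝ)‖ + ‖C * B‖ := norm_sub_le _ _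
        _ ≤ 1 + ‖C‖ * θ := by
            rw [hone]
            have h5 := Matrix.l2_opNorm_mul C B
            have h6 : ‖C‖ * ‖B‖ ≤ ‖C‖ * θ :=
              mul_le_mul_of_nonneg_left hBnorm (norm_nonneg _)
            linarith
    rw [le_div_iff₀ h1θ]
    nlinarith [norm_nonneg C]
  refine ⟨hdetsum, ?_, ?_⟩
  · rw [matOpNorm_eq_l2]
    exact hCB
  · intro dtil
    have hinv : (γ • Qbar + Φ)⁻¹ = C * Φ⁻¹ := by
      rw [hfac, Matrix.mul_inv_rev, hCdef]
    have hassoc : ((γ • Qbar + Φ)⁻¹ * (Qbar * Qbar * Q)) *ᵥ dtil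
        = C *ᵥ ((Φ⁻¹ * (Qbar * Qbar * Q)) *ᵥ dtil) := by
      rw [hinv, mulVec_mulVec, Matrix.mul_assoc]
    rw [hassoc, euclNorm_smul, abs_of_pos hγ]
    have h3 := euclNorm_mulVec_le C ((Φ⁻¹ * (Qbar * Qbar * Q)) *ᵥ dtil)
    have h4 : ‖C‖ * euclNorm ((Φ⁻¹ * (Qbar * Qbar * Q)) *ᵥ dtil)
        ≤ 1 / (1 - θ) * euclNorm ((Φ⁻¹ * (Qbar * Qbar * Q)) *ᵥ dtil) :=
      mul_le_mul_of_nonneg_right hCB (euclNorm_nonneg _)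
    calc γ * euclNorm (C *ᵥ ((Φ⁻¹ * (Qbar * Qbar * Q)) *ᵥ dtil))
        ≤ γ * (1 / (1 - θ) * euclNorm ((Φ⁻¹ * (Qbar * Qbar * Q)) *ᵥ dtil)) :=
          mul_le_mul_of_nonneg_left (le_trans h3 h4) hγ.le
      _ = γ / (1 - θ) * euclNorm ((Φ⁻¹ * (Qbar * Qbar * Q)) *ᵥ dtil) := by ring
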